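/- (F-face of a plate.) Let z be a Boolean function on a finite set I, let H = (A₁,…,A_ℓ) and F = (S₁,…,S_k) be compositions of I, and let S̄_m := S₁ ∪ … ∪ S_m be the initial segments of F. (a) If F ≤ H (equivalently, every initial segment of F is an initial segment of H), then for each 0 < m < k the supremum of h ↦ Σ_{i∈S̄_m} hᵢ over [[H]]_z equals z(S̄_m); moreover the set [[H]]_z ∩ { h : Σ_{i∈S̄_m} hᵢ = z(S̄_m) for all 0 < m < k } is nonempty and is exactly the set of points of [[H]]_z at which all the functions h ↦ Σ_{i∈S̄_m} hᵢ (0 < m < k) are simultaneously maximized (the F-face of the plate). (b) If F ≰ H, then there exists 0 < m < k such that h ↦ Σ_{i∈S̄_m} hᵢ is unbounded above on [[H]]_z, so [[H]]_z has no F-face. -/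

import Mathlib

/-- A composition of the subset `S ⊆ I`, encoded as a block-index function `f : I → ℕ`
whose image on `S` is an initial segment of `ℕ` (blocks are the fibers of `f` in `S`,
listed in increasing order of their index; the initial segments `Ā_j` of the
composition are the sublevel sets of `f`). -/
def IsCompositionOn {I : Type*} (S : Set I) (f : I → ℕ) : Prop :=
  ∀ n m : ℕ, n ≤ m → (∃ i ∈ S, f i = m) → ∃ i ∈ S, f i = n

/-- The initial segment `Ā_j` of the composition encoded by `f`. -/
def sublevel {I : Type*} [Fintype I] (f : I → ℕ) (j : ℕ) : Finset I :=
  Finset.univ.filter (fun i => f i < j)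

/-- The plate `[[H]]_z ⊆ ℝ^I` of the composition encoded by `f` and the Boolean
function `z`. -/
def plate {I : Type*} [Fintype I] (f : I → ℕ) (z : Finset I → ℤ) : Set (I → ℝ) :=
  {h | (∑ i, h i) = (z Finset.univ : ℝ) ∧
    ∀ j : ℕ, (∑ i ∈ sublevel f j, h i) ≤ (z (sublevel f j) : ℝ)}

set_option linter.unusedSectionVars false

section Aux

variable {I : Type*} [Fintype I] [DecidableEq I] (z : Finset I → ℤ) (f : I → ℕ)

noncomputable def canon (i : I) : ℝ :=
  ((z (sublevel f (f i + 1)) : ℝ) - z (sublevel f (f i))) /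
    (Finset.univ.filter (fun j => f j = f i)).card

lemma sublevel_zero : sublevel f 0 = ∅ := by
  simp [sublevel]

lemma sublevel_succ (j : ℕ) :
    sublevel f (j + 1) = sublevel f j ∪ Finset.univ.filter (fun i => f i = j) := by
  ext i
  simp [sublevel, Nat.lt_succ_iff_lt_or_eq, Nat.le_iff_lt_or_eq]

lemma sublevel_sup : sublevel f (Finset.univ.sup f + 1) = Finset.univ := by
  ext i
  simp [sublevel, Nat.lt_succ_iff, Finset.le_sup (Finset.mem_univ i)]

lemma sum_canon (hz : z ∅ = 0) (j : ℕ) :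
    ∑ i ∈ sublevel f j, canon z f i = (z (sublevel f j) : ℝ) := by
  induction j with
  | zero => simp [sublevel_zero, hz]
  | succ j ih =>
    have hdisj : Disjoint (sublevel f j) (Finset.univ.filter fun i => f i = j) := by
      simp only [Finset.disjoint_left, sublevel, Finset.mem_filter, Finset.mem_univ, true_and]
      omega
    by_cases hfib : (Finset.univ.filter (fun i => f i = j)).Nonempty
    · have hsum : ∑ i ∈ Finset.univ.filter (fun i => f i = j), canon z f i
          = (z (sublevel f (j + 1)) : ℝ) - z (sublevel f j) := by
        have hcard : ((Finset.univ.filter (fun i => f i = j)).card : ℝ) ≠ 0 := by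
          exact_mod_cast Finset.card_ne_zero_of_mem hfib.choose_spec
        rw [Finset.sum_congr rfl (fun i hi => ?_)]
        · rw [Finset.sum_const, nsmul_eq_mul, mul_div_cancel₀ _ hcard]
        · have hij : f i = j := by simpa using (Finset.mem_filter.mp hi).2
          simp only [canon, hij]
      calc ∑ i ∈ sublevel f (j + 1), canon z f i
          = (∑ i ∈ sublevel f j, canon z f i)
            + ∑ i ∈ Finset.univ.filter (fun i => f i = j), canon z f i := by
            rw [sublevel_succ, Finset.sum_union hdisj]
        _ = (z (sublevel f (j + 1)) : ℝ) := by rw [ih, hsum]; ring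
    · have hempty : Finset.univ.filter (fun i => f i = j) = ∅ :=
        Finset.not_nonempty_iff_eq_empty.mp hfib
      have heq : sublevel f (j + 1) = sublevel f j := by
        rw [sublevel_succ, hempty, Finset.union_empty]
      rw [heq, ih]

lemma canon_mem_plate (hz : z ∅ = 0) : canon z f ∈ plate f z := by
  refine ⟨?_, fun j => le_of_eq (sum_canon z f hz j)⟩
  rw [← sublevel_sup f, sum_canon z f hz]

lemma sum_delta (a b : I) (s : Finset I) :
    ∑ i ∈ s, ((if i = a then (1:ℝ) else 0) - (if i = b then 1 else 0))
      = (if a ∈ s then 1 else 0) - (if b ∈ s then 1 else 0) := by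
  rw [Finset.sum_sub_distrib, Finset.sum_ite_eq' s a (fun _ => (1:ℝ)),
    Finset.sum_ite_eq' s b (fun _ => (1:ℝ))]

end Aux

/-- The F-face of a plate: `f` encodes the composition `H` and `g` encodes `F`, with
initial segments `S̄_m = sublevel g m`.  (a) If every initial segment of `F` is an
initial segment of `H`, then for each proper nonempty `S̄_m` the function
`h ↦ ∑_{i ∈ S̄_m} hᵢ` has greatest value `z (S̄_m)` on `[[H]]_z`, and the set of points
of `[[H]]_z` where all these equalities hold is nonempty and is exactly the set of
simultaneous maximizers (the F-face).  (b) Otherwise some such function is unbounded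
above on `[[H]]_z`, so there is no F-face. -/
theorem statement16 {I : Type*} [Fintype I] [DecidableEq I]
    (z : Finset I → ℤ) (hz : z ∅ = 0)
    (f g : I → ℕ) (hf : IsCompositionOn Set.univ f) (hg : IsCompositionOn Set.univ g) :
    ((∀ m : ℕ, ∃ j : ℕ, sublevel g m = sublevel f j) →
      (∀ m : ℕ, (sublevel g m).Nonempty → sublevel g m ≠ Finset.univ →
        IsGreatest {r : ℝ | ∃ h ∈ plate f z, r = ∑ i ∈ sublevel g m, h i}
          (z (sublevel g m) : ℝ)) ∧
      (plate f z ∩ {h | ∀ m : ℕ, (sublevel g m).Nonempty →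
          sublevel g m ≠ Finset.univ →
          (∑ i ∈ sublevel g m, h i) = (z (sublevel g m) : ℝ)}).Nonempty ∧
      plate f z ∩ {h | ∀ m : ℕ, (sublevel g m).Nonempty →
          sublevel g m ≠ Finset.univ →
          (∑ i ∈ sublevel g m, h i) = (z (sublevel g m) : ℝ)} =
        {h | h ∈ plate f z ∧ ∀ m : ℕ, (sublevel g m).Nonempty →
          sublevel g m ≠ Finset.univ →
          ∀ h' ∈ plate f z, (∑ i ∈ sublevel g m, h' i) ≤ ∑ i ∈ sublevel g m, h i}) ∧
    (¬ (∀ m : ℕ, ∃ j : ℕ, sublevel g m = sublevel f j) →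
      ∃ m : ℕ, (sublevel g m).Nonempty ∧ sublevel g m ≠ Finset.univ ∧
        ∀ M : ℝ, ∃ h ∈ plate f z, M < ∑ i ∈ sublevel g m, h i) := by
  have hmem : canon z f ∈ plate f z := canon_mem_plate z f hz
  constructor
  · intro hA
    refine ⟨?_, ?_, ?_⟩
    · intro m _ _
      obtain ⟨j, hj⟩ := hA m
      constructor
      · exact ⟨canon z f, hmem, by rw [hj, sum_canon z f hz]⟩
      · rintro r ⟨h, hh, rfl⟩
        rw [hj]
        exact hh.2 j
    · refine ⟨canon z f, hmem, fun m _ _ => ?_⟩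
      obtain ⟨j, hj⟩ := hA m
      rw [hj, sum_canon z f hz]
    · ext h
      simp only [Set.mem_inter_iff, Set.mem_setOf_eq]
      constructor
      · rintro ⟨hp, heq⟩
        refine ⟨hp, fun m hne hnu h' hp' => ?_⟩
        obtain ⟨j, hj⟩ := hA m
        rw [heq m hne hnu, hj]
        exact hp'.2 j
      · rintro ⟨hp, hmax⟩
        refine ⟨hp, fun m hne hnu => ?_⟩
        obtain ⟨j, hj⟩ := hA m
        refine le_antisymm (by rw [hj]; exact hp.2 j) ?_
        have h1 := hmax m hne hnu (canon z f) hmem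
        have h2 : (z (sublevel g m) : ℝ) = ∑ i ∈ sublevel g m, canon z f i := by
          rw [hj, sum_canon z f hz]
        rw [h2]
        exact h1
  · intro hB
    push_neg at hB
    obtain ⟨m, hm⟩ := hB
    have hne : (sublevel g m).Nonempty := by
      rw [Finset.nonempty_iff_ne_empty]
      intro h0
      exact hm 0 (by rw [h0, sublevel_zero])
    have hnu : sublevel g m ≠ Finset.univ := fun h0 =>
      hm (Finset.univ.sup f + 1) (by rw [h0, sublevel_sup])
    have hex : ∃ a ∈ sublevel g m, ∃ b ∉ sublevel g m, f b ≤ f a := by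
      by_contra hc
      push_neg at hc
      obtain ⟨a₀, ha₀, hmaxa⟩ := Finset.exists_max_image (sublevel g m) f hne
      apply hm (f a₀ + 1)
      ext i
      simp only [sublevel, Finset.mem_filter, Finset.mem_univ, true_and, Nat.lt_succ_iff]
      constructor
      · intro hi
        have := hmaxa i (by simpa [sublevel] using hi)
        omega
      · intro hi
        by_contra hiS
        have := hc a₀ ha₀ i (by simpa [sublevel] using hiS)
        omega
    obtain ⟨a, haS, b, hbS, hba⟩ := hex
    refine ⟨m, hne, hnu, fun M => ?_⟩
    set c := ∑ i ∈ sublevel g m, canon z f i with hc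
    set t := max 0 (M - c) + 1 with ht
    have ht0 : (0:ℝ) ≤ t := by
      have := le_max_left 0 (M - c); linarith
    have htM : M < c + t := by
      have := le_max_right 0 (M - c); linarith
    set h : I → ℝ := fun i =>
      canon z f i + t * ((if i = a then (1:ℝ) else 0) - (if i = b then 1 else 0)) with hdef
    have hsums : ∀ s : Finset I, ∑ i ∈ s, h i
        = (∑ i ∈ s, canon z f i)
          + t * ((if a ∈ s then (1:ℝ) else 0) - (if b ∈ s then 1 else 0)) := by
      intro s
      rw [hdef]
      rw [Finset.sum_add_distrib, ← Finset.mul_sum, sum_delta]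
    have hmemS : ∀ j, a ∈ sublevel f j → b ∈ sublevel f j := by
      intro j haj
      simp only [sublevel, Finset.mem_filter, Finset.mem_univ, true_and] at haj ⊢
      omega
    refine ⟨h, ⟨?_, ?_⟩, ?_⟩
    · rw [hsums Finset.univ]
      simp [hmem.1]
    · intro j
      rw [hsums (sublevel f j)]
      have hle := (sum_canon z f hz j).le
      by_cases haj : a ∈ sublevel f j
      · simp only [haj, hmemS j haj, if_true]
        simpa using hle
      · simp only [haj, if_false]
        by_cases hbj : b ∈ sublevel f j
        · simp only [hbj, if_true]
          nlinarith [ (sum_canon z f hz j) ]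
        · simp only [hbj, if_false]
          simpa using hle
    · rw [hsums (sublevel g m)]
      simp only [haS, hbS, if_true, if_false]
      rw [← hc]
      linarith
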